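/- For 1 ≤ m < d and real numbers φ₁,…,φ_d, the product cos φ₁ ⋯ cos φ_m · sin φ_{m+1} ⋯ sin φ_d equals 2^{−d} times the sum over all sign sequences (s₁,…,s_m) ∈ {−1,1}^m of the iterated integral over σ_{m+1} ∈ [−φ_{m+1}, φ_{m+1}], …, σ_d ∈ [−φ_d, φ_d] of cos(s₁φ₁ + ⋯ + s_mφ_m + σ_{m+1} + ⋯ + σ_d). -/

import Mathlib

open Real MeasureTheory

/-- Iterated interval integral of a function of the sum of the variables. -/
noncomputable def iterIntSum : List ℝ → (ℝ → ℝ) → ℝ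
  | [], f => f 0
  | a :: as, f => ∫ σ in (-a)..a, iterIntSum as (fun t => f (σ + t))

lemma iterIntSum_cos (L : List ℝ) (c : ℝ) :
    iterIntSum L (fun t => Real.cos (c + t))
      = 2 ^ L.length * (L.map Real.sin).prod * Real.cos c := by
  induction L generalizing c with
  | nil => simp [iterIntSum]
  | cons a as ih =>
    have h1 : ∀ σ : ℝ, iterIntSum as (fun t => Real.cos (c + (σ + t)))
        = 2 ^ as.length * (as.map Real.sin).prod * Real.cos (c + σ) := by
      intro σ
      simpa [add_assoc] using ih (c + σ)
    simp only [iterIntSum]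
    rw [intervalIntegral.integral_congr (fun σ _ => h1 σ),
      intervalIntegral.integral_const_mul, intervalIntegral.integral_comp_add_left,
      integral_cos]
    simp only [List.length_cons, List.map_cons, List.prod_cons]
    rw [Real.sin_add, Real.sin_add, Real.sin_neg, Real.cos_neg]
    ring

lemma sum_cos_aux (m : ℕ) (φ : Fin m → ℝ) (c : ℝ) :
    ∑ s : Fin m → Bool, Real.cos (c + ∑ i, (if s i then (1:ℝ) else -1) * φ i)
      = 2 ^ m * (∏ i, Real.cos (φ i)) * Real.cos c := by
  induction m generalizing c with
  | zero => simp
  | succ n ih =>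
    rw [← (Fin.consEquiv (fun _ : Fin (n + 1) => Bool)).sum_comp, Fintype.sum_prod_type]
    have key : ∀ (b : Bool) (s : Fin n → Bool),
        Real.cos (c + ∑ i, (if (Fin.consEquiv (fun _ : Fin (n + 1) => Bool)) (b, s) i then (1:ℝ) else -1) * φ i)
          = Real.cos ((c + (if b then (1:ℝ) else -1) * φ 0)
              + ∑ i, (if s i then (1:ℝ) else -1) * φ i.succ) := by
      intro b s
      rw [Fin.sum_univ_succ]
      simp [Fin.consEquiv, add_assoc]
    have : ∀ b : Bool,
        (∑ s : Fin n → Bool,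
          Real.cos (c + ∑ i, (if (Fin.consEquiv (fun _ : Fin (n + 1) => Bool)) (b, s) i then (1:ℝ) else -1) * φ i))
          = 2 ^ n * (∏ i : Fin n, Real.cos (φ i.succ))
              * Real.cos (c + (if b then (1:ℝ) else -1) * φ 0) := by
      intro b
      rw [Finset.sum_congr rfl (fun s _ => key b s)]
      exact ih (fun i => φ i.succ) (c + (if b then (1:ℝ) else -1) * φ 0)
    rw [Fintype.sum_bool, this true, this false, Fin.prod_univ_succ]
    have e1 : (if (true : Bool) = true then (1:ℝ) else -1) = 1 := rfl
    have e2 : (if (false : Bool) = true then (1:ℝ) else -1) = -1 := rfl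
    rw [e1, e2, one_mul, neg_one_mul, Real.cos_add,
      show c + -φ 0 = c - φ 0 by ring, Real.cos_sub]
    ring

theorem prod_cos_mul_prod_sin_eq_sum_integral (m k : ℕ) (hm : 1 ≤ m) (hk : 1 ≤ k)
    (φ : Fin m → ℝ) (ψ : Fin k → ℝ) :
    (∏ i, Real.cos (φ i)) * ∏ j, Real.sin (ψ j)
      = (1 / 2 ^ (m + k)) * ∑ s : Fin m → Bool,
          iterIntSum (List.ofFn ψ)
            (fun t => Real.cos ((∑ i, (if s i then (1 : ℝ) else -1) * φ i) + t)) := by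
  have h1 : ∀ s : Fin m → Bool,
      iterIntSum (List.ofFn ψ)
        (fun t => Real.cos ((∑ i, (if s i then (1 : ℝ) else -1) * φ i) + t))
        = 2 ^ k * (∏ j, Real.sin (ψ j))
            * Real.cos (∑ i, (if s i then (1 : ℝ) else -1) * φ i) := by
    intro s
    rw [iterIntSum_cos]
    simp [List.map_ofFn, List.prod_ofFn, Function.comp]
  rw [Finset.sum_congr rfl (fun s _ => h1 s), ← Finset.mul_sum]
  have h2 := sum_cos_aux m φ 0
  simp only [zero_add, Real.cos_zero, mul_one] at h2
  rw [h2]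
  have : (2:ℝ) ^ (m + k) ≠ 0 := by positivity
  field_simp [pow_add]
  ring
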